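/- Let D be the derivation on ℚ[z,x,y,w] with D(z) = zxy, D(x) = xyw, D(y) = y³w, D(w) = yw². Then for all n ≥ 1, D^n(z) evaluated at y = z = 1, x = a, w = b equals a·(a+bn)^{n-1}, for any a, b (as an identity of polynomials in a and b). -/

import Mathlib

open MvPolynomial

/-- The formal derivative of the grammar
`H : z → zxy, x → xyw, y → y³w, w → yw²`, as the derivation on `ℚ[z,x,y,w]`
(variables `0,1,2,3` are `z,x,y,w`). -/
noncomputable def Dgram : Derivation ℚ (MvPolynomial (Fin 4) ℚ) (MvPolynomial (Fin 4) ℚ) :=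
  MvPolynomial.mkDerivation ℚ
    ![X 0 * X 1 * X 2, X 1 * X 2 * X 3, X 2 ^ 3 * X 3, X 2 * X 3 ^ 2]

open Finset

noncomputable def phi (b T : ℝ) (m r : ℕ) : ℝ :=
  ∑ i ∈ Finset.range m, ((m-1).descFactorial i : ℝ) * ((r+i).choose i : ℝ) * b^i * T^(m-1-i)

lemma phi_zero (b T : ℝ) (r : ℕ) : phi b T 0 r = 0 := by simp [phi]
lemma phi_one (b T : ℝ) (r : ℕ) : phi b T 1 r = 1 := by simp [phi]
lemma phi_two (b T : ℝ) (r : ℕ) : phi b T 2 r = T + (r+1)*b := by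
  simp [phi, Finset.sum_range_succ]

lemma choose_absorb (r i : ℕ) : (r+1) * (r+i+1).choose i = (r+i+1) * (r+i).choose i := by
  have h1 : (r+i+1).choose i = (r+i+1).choose (r+1) := by
    rw [← Nat.choose_symm (show r+1 ≤ r+i+1 by omega)]; congr 1; omega
  have h2 : (r+i).choose i = (r+i).choose r := by
    rw [← Nat.choose_symm (show r ≤ r+i by omega)]; congr 1; omega
  have h3 := Nat.add_one_mul_choose_eq (r+i) r
  rw [h1, h2, h3]; ring

lemma choose_absorb' (r i : ℕ) : (i+1) * (r+i+1).choose (i+1) = (r+1) * (r+i+1).choose i := by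
  have h1 := Nat.add_one_mul_choose_eq (r+i) i
  calc (i+1) * (r+i+1).choose (i+1) = (r+i+1) * (r+i).choose i := by rw [h1]; ring
    _ = (r+1) * (r+i+1).choose i := (choose_absorb r i).symm

lemma desc_split (m i : ℕ) : (m+1).descFactorial (i+1)
    = m.descFactorial (i+1) + (i+1) * m.descFactorial i := by
  rcases le_or_gt i m with h | h
  · rw [Nat.succ_descFactorial_succ, Nat.descFactorial_succ, ← Nat.add_mul]
    congr 1; omega
  · rw [Nat.succ_descFactorial_succ,
      Nat.descFactorial_of_lt (by omega), Nat.descFactorial_of_lt (by omega)]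
    simp

lemma phi_A (b T : ℝ) (m r : ℕ) :
    phi b T (m+1) (r+1) - phi b T (m+1) r = m * b * phi b T m (r+1) := by
  rcases m with _ | m
  · simp [phi]
  · unfold phi
    simp only [Nat.add_sub_cancel]
    rw [← Finset.sum_sub_distrib]
    rw [Finset.sum_range_succ' (fun i => ((m+1).descFactorial i : ℝ) * ((r+1+i).choose i : ℝ) * b^i * T^(m+1-i)
        - ((m+1).descFactorial i : ℝ) * ((r+i).choose i : ℝ) * b^i * T^(m+1-i)) (m+1)]
    rw [Finset.mul_sum]
    have h0 : ((m+1).descFactorial 0 : ℝ) * ((r+1+0).choose 0 : ℝ) * b^0 * T^(m+1-0)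
        - ((m+1).descFactorial 0 : ℝ) * ((r+0).choose 0 : ℝ) * b^0 * T^(m+1-0) = 0 := by
      simp
    rw [h0, add_zero]
    apply Finset.sum_congr rfl
    intro i hi
    have hd : (m+1).descFactorial (i+1) = (m+1) * m.descFactorial i :=
      Nat.succ_descFactorial_succ m i
    have hp : (r+1+(i+1)).choose (i+1) = (r+(i+1)).choose (i+1) + (r+1+i).choose i := by
      rw [show r+1+(i+1) = (r+i+1)+1 from by omega, Nat.choose_succ_succ' (r+i+1) i,
        show r+(i+1) = r+i+1 from by omega, show r+1+i = r+i+1 from by omega]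
      omega
    rw [hd, hp, show m+1-(i+1) = m-i from by omega]
    push_cast
    ring

lemma phi_B (b T : ℝ) (m r : ℕ) :
    phi b T (m+2) r = T * phi b T (m+1) r + (r+1) * b * phi b T (m+1) (r+1) := by
  have L : phi b T (m+2) r = (∑ i ∈ Finset.range (m+1),
      ((m+1).descFactorial (i+1) : ℝ) * ((r+i+1).choose (i+1) : ℝ) * b^(i+1) * T^(m-i)) + T^(m+1) := by
    unfold phi
    simp only [show m+2-1 = m+1 from rfl]
    rw [Finset.sum_range_succ']
    congr 1
    · apply Finset.sum_congr rfl
      intro i hi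
      rw [show r+(i+1) = r+i+1 from by omega, show m+1-(i+1) = m-i from by omega]
    · simp
  have R1 : T * phi b T (m+1) r = (∑ i ∈ Finset.range (m+1),
      (m.descFactorial (i+1) : ℝ) * ((r+i+1).choose (i+1) : ℝ) * b^(i+1) * T^(m-i)) + T^(m+1) := by
    unfold phi
    simp only [Nat.add_sub_cancel]
    rw [Finset.sum_range_succ', mul_add, Finset.mul_sum]
    congr 1
    · rw [Finset.sum_range_succ]
      have hz : (m.descFactorial (m+1) : ℝ) = 0 := by
        rw [Nat.descFactorial_of_lt (by omega)]; simp
      rw [hz]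
      simp only [zero_mul, mul_zero, add_zero]
      apply Finset.sum_congr rfl
      intro i hi
      have hlt : i < m := Finset.mem_range.mp hi
      rw [show r+(i+1) = r+i+1 from by omega, show m-i = m-(i+1)+1 from by omega, pow_succ]
      ring
    · simp [pow_succ]
      ring
  have R2 : (r+1) * b * phi b T (m+1) (r+1) = ∑ i ∈ Finset.range (m+1),
      ((r:ℝ)+1) * (m.descFactorial i : ℝ) * ((r+1+i).choose i : ℝ) * b^(i+1) * T^(m-i) := by
    unfold phi
    simp only [Nat.add_sub_cancel]
    rw [Finset.mul_sum]
    apply Finset.sum_congr rfl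
    intro i hi
    push_cast
    ring
  rw [L, R1, R2, add_right_comm, ← Finset.sum_add_distrib]
  congr 1
  apply Finset.sum_congr rfl
  intro i hi
  have hdc : ((m+1).descFactorial (i+1) : ℝ)
      = (m.descFactorial (i+1) : ℝ) + ((i:ℝ)+1) * (m.descFactorial i : ℝ) := by
    exact_mod_cast congrArg (Nat.cast : ℕ → ℝ) (desc_split m i)
  have hac : ((i:ℝ)+1) * ((r+i+1).choose (i+1) : ℝ) = ((r:ℝ)+1) * ((r+i+1).choose i : ℝ) := by
    exact_mod_cast congrArg (Nat.cast : ℕ → ℝ) (choose_absorb' r i)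
  have hsy : ((r+1+i).choose i : ℝ) = ((r+i+1).choose i : ℝ) := by
    rw [show r+1+i = r+i+1 from by omega]
  rw [hsy]
  linear_combination (((r+i+1).choose (i+1) : ℝ) * b^(i+1) * T^(m-i)) * hdc
    + ((m.descFactorial i : ℝ) * b^(i+1) * T^(m-i)) * hac


lemma phi_Ext (b T : ℝ) (m : ℕ) :
    phi b T (m+1) 0 - m * b * phi b T m 0 = T^m := by
  rcases m with _ | m
  · simp [phi]
  · unfold phi
    simp only [Nat.add_sub_cancel, zero_add]
    rw [Finset.sum_range_succ', Finset.mul_sum]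
    have h0 : ((m+1).descFactorial 0 : ℝ) * ((Nat.choose 0 0 : ℕ) : ℝ) * b^0 * T^(m+1-0) = T^(m+1) := by
      simp
    rw [h0]
    have : ∀ i ∈ Finset.range (m+1),
        ((m+1).descFactorial (i+1) : ℝ) * ((Nat.choose (i+1) (i+1) : ℕ) : ℝ) * b^(i+1) * T^(m+1-(i+1))
        = (m+1) * b * ((m.descFactorial i : ℝ) * ((Nat.choose i i : ℕ) : ℝ) * b^i * T^(m-i)) := by
      intro i hi
      rw [Nat.succ_descFactorial_succ, Nat.choose_self, Nat.choose_self,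
        show m+1-(i+1) = m-i from by omega]
      push_cast
      ring
    rw [Finset.sum_congr rfl this]
    push_cast
    ring

lemma phi_C (b T : ℝ) (m j : ℕ) :
    (T - ((m:ℝ)+3)*b) * (phi b T (m+1) (j+1) - phi b T (m+1) j)
      = ((m:ℝ)+3)*b*phi b T (m+1) j + ((j:ℝ)-1)*b*phi b T (m+1) (j+1)
        - ((j:ℝ)+2)*b*phi b T (m+1) (j+2) := by
  rcases m with _ | m
  · simp [show phi b T 1 (j+1) = 1 from by simp [phi], show phi b T 1 j = 1 from by simp [phi],
      show phi b T 1 (j+2) = 1 from by simp [phi]]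
    ring
  · rw [phi_A b T (m+1) j]
    push_cast
    have hL1 : ((m:ℝ)+1)*b*(T*phi b T (m+1) (j+1)) = ((m:ℝ)+1)*b*T^(m+1)
        + ∑ i ∈ Finset.range m,
          ((m+1).descFactorial (i+2) : ℝ) * ((j+i+2).choose (i+1) : ℝ) * b^(i+2) * T^(m-i) := by
      unfold phi
      simp only [Nat.add_sub_cancel]
      rw [Finset.mul_sum, Finset.sum_range_succ', mul_add, Finset.mul_sum, add_comm]
      congr 1
      · simp only [Nat.descFactorial_zero, Nat.choose_zero_right, Nat.cast_one, pow_zero,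
          Nat.sub_zero]
        ring
      · apply Finset.sum_congr rfl
        intro i hi
        have hlt : i < m := Finset.mem_range.mp hi
        have hd : ((m+1).descFactorial (i+2) : ℝ) = ((m:ℝ)+1) * (m.descFactorial (i+1) : ℝ) := by
          exact_mod_cast congrArg (Nat.cast : ℕ → ℝ) (Nat.succ_descFactorial_succ m (i+1))
        rw [hd, show j+1+(i+1) = j+i+2 from by omega, show m-i = (m-(i+1))+1 from by omega,
          pow_succ]
        ring
    have hL2 : ((m:ℝ)+1)*b*(b*phi b T (m+1) (j+1)) = ∑ i ∈ Finset.range (m+1),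
        ((m+1).descFactorial (i+1) : ℝ) * ((j+i+1).choose i : ℝ) * b^(i+2) * T^(m-i) := by
      unfold phi
      simp only [Nat.add_sub_cancel]
      rw [Finset.mul_sum, Finset.mul_sum]
      apply Finset.sum_congr rfl
      intro i hi
      have hd : ((m+1).descFactorial (i+1) : ℝ) = ((m:ℝ)+1) * (m.descFactorial i : ℝ) := by
        exact_mod_cast congrArg (Nat.cast : ℕ → ℝ) (Nat.succ_descFactorial_succ m i)
      rw [hd, show j+1+i = j+i+1 from by omega]
      ring
    have hR : ∀ (r : ℕ), phi b T (m+2) r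
        = T^(m+1) + ∑ i ∈ Finset.range (m+1),
        ((m+1).descFactorial (i+1) : ℝ) * ((r+(i+1)).choose (i+1) : ℝ) * b^(i+1) * T^(m-i) := by
      intro r
      unfold phi
      simp only [show m+2-1 = m+1 from rfl]
      rw [Finset.sum_range_succ', add_comm]
      congr 1
      · simp
      · apply Finset.sum_congr rfl
        intro i hi
        rw [show m+1-(i+1) = m-i from by omega]
    have hR0 := hR j
    have hR1 := hR (j+1)
    have hR2 := hR (j+2)
    have hw0 : b * (∑ i ∈ Finset.range (m+1),
          ((m+1).descFactorial (i+1) : ℝ) * ((j+(i+1)).choose (i+1) : ℝ) * b^(i+1) * T^(m-i))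
        = ∑ i ∈ Finset.range (m+1),
          ((m+1).descFactorial (i+1) : ℝ) * ((j+i+1).choose (i+1) : ℝ) * b^(i+2) * T^(m-i) := by
      rw [Finset.mul_sum]
      apply Finset.sum_congr rfl
      intro i hi
      rw [show j+(i+1) = j+i+1 from by omega]
      ring
    have hw1 : b * (∑ i ∈ Finset.range (m+1),
          ((m+1).descFactorial (i+1) : ℝ) * ((j+1+(i+1)).choose (i+1) : ℝ) * b^(i+1) * T^(m-i))
        = ∑ i ∈ Finset.range (m+1),
          ((m+1).descFactorial (i+1) : ℝ) * ((j+i+2).choose (i+1) : ℝ) * b^(i+2) * T^(m-i) := by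
      rw [Finset.mul_sum]
      apply Finset.sum_congr rfl
      intro i hi
      rw [show j+1+(i+1) = j+i+2 from by omega]
      ring
    have hw2 : b * (∑ i ∈ Finset.range (m+1),
          ((m+1).descFactorial (i+1) : ℝ) * ((j+2+(i+1)).choose (i+1) : ℝ) * b^(i+1) * T^(m-i))
        = ∑ i ∈ Finset.range (m+1),
          ((m+1).descFactorial (i+1) : ℝ) * ((j+i+3).choose (i+1) : ℝ) * b^(i+2) * T^(m-i) := by
      rw [Finset.mul_sum]
      apply Finset.sum_congr rfl
      intro i hi
      rw [show j+2+(i+1) = j+i+3 from by omega]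
      ring
    have key : (∑ i ∈ Finset.range m,
          ((m+1).descFactorial (i+2) : ℝ) * ((j+i+2).choose (i+1) : ℝ) * b^(i+2) * T^(m-i))
        - ((m:ℝ)+4) * ∑ i ∈ Finset.range (m+1),
          ((m+1).descFactorial (i+1) : ℝ) * ((j+i+1).choose i : ℝ) * b^(i+2) * T^(m-i)
        = ((m:ℝ)+4) * (∑ i ∈ Finset.range (m+1),
            ((m+1).descFactorial (i+1) : ℝ) * ((j+i+1).choose (i+1) : ℝ) * b^(i+2) * T^(m-i))
          + ((j:ℝ)-1) * (∑ i ∈ Finset.range (m+1),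
            ((m+1).descFactorial (i+1) : ℝ) * ((j+i+2).choose (i+1) : ℝ) * b^(i+2) * T^(m-i))
          - ((j:ℝ)+2) * (∑ i ∈ Finset.range (m+1),
            ((m+1).descFactorial (i+1) : ℝ) * ((j+i+3).choose (i+1) : ℝ) * b^(i+2) * T^(m-i)) := by
      have hext : (∑ i ∈ Finset.range m,
          ((m+1).descFactorial (i+2) : ℝ) * ((j+i+2).choose (i+1) : ℝ) * b^(i+2) * T^(m-i))
          = ∑ i ∈ Finset.range (m+1),
          ((m+1).descFactorial (i+2) : ℝ) * ((j+i+2).choose (i+1) : ℝ) * b^(i+2) * T^(m-i) := by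
        rw [Finset.sum_range_succ]
        have : ((m+1).descFactorial (m+2) : ℝ) = 0 := by
          rw [Nat.descFactorial_of_lt (by omega)]; simp
        rw [this]; ring
      rw [hext, Finset.mul_sum, Finset.mul_sum, Finset.mul_sum, Finset.mul_sum,
        ← Finset.sum_sub_distrib, ← Finset.sum_add_distrib, ← Finset.sum_sub_distrib]
      apply Finset.sum_congr rfl
      intro i hi
      have him : i ≤ m := by have := Finset.mem_range.mp hi; omega
      have hd : ((m+1).descFactorial (i+2) : ℝ)
          = ((m:ℝ)-(i:ℝ)) * ((m+1).descFactorial (i+1) : ℝ) := by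
        have h1 : (m+1).descFactorial (i+2) = (m-i) * (m+1).descFactorial (i+1) := by
          rw [Nat.descFactorial_succ]
          congr 1
          omega
        rw [h1, Nat.cast_mul, Nat.cast_sub him]
      have hP : ((j+i+2).choose (i+1) : ℝ)
          = ((j+i+1).choose i : ℝ) + ((j+i+1).choose (i+1) : ℝ) := by
        exact_mod_cast congrArg (Nat.cast : ℕ → ℝ) (Nat.choose_succ_succ' (j+i+1) i)
      have hA : ((j:ℝ)+2) * ((j+i+3).choose (i+1) : ℝ)
          = ((j:ℝ)+(i:ℝ)+3) * ((j+i+2).choose (i+1) : ℝ) := by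
        have h2 := choose_absorb (j+1) (i+1)
        have e1 : j+1+(i+1)+1 = j+i+3 := by omega
        have e2 : j+1+(i+1) = j+i+2 := by omega
        rw [e1, e2] at h2
        exact_mod_cast congrArg (Nat.cast : ℕ → ℝ) h2
      linear_combination (((j+i+2).choose (i+1) : ℝ) * b^(i+2) * T^(m-i)) * hd
        + (((m:ℝ)+4) * ((m+1).descFactorial (i+1) : ℝ) * b^(i+2) * T^(m-i)) * hP
        + (((m+1).descFactorial (i+1) : ℝ) * b^(i+2) * T^(m-i)) * hA
    rw [hR0, hR1, hR2]
    linear_combination hL1 - ((m:ℝ)+4)*hL2 + key - ((m:ℝ)+4)*hw0 - ((j:ℝ)-1)*hw1 + ((j:ℝ)+2)*hw2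

lemma phi_star (b P : ℝ) (m j : ℕ) :
    (P + (j:ℝ)*b) * phi b (P+((m:ℝ)+2)*b) (m+2) j
      - ((m:ℝ)+1)*b*P*phi b (P+((m:ℝ)+2)*b) (m+1) j
  = P * ((P + b + ((j:ℝ)+1)*b) * phi b (P+((m:ℝ)+2)*b) (m+1) (j+1)
        - (m:ℝ)*b*(P+b)*phi b (P+((m:ℝ)+2)*b) m (j+1))
  + (j:ℝ)*b*((P + b + ((j:ℝ)+2)*b) * phi b (P+((m:ℝ)+2)*b) (m+1) (j+2)
        - (m:ℝ)*b*(P+b)*phi b (P+((m:ℝ)+2)*b) m (j+2)) := by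
  rcases m with _ | m
  · norm_num [phi_zero, phi_one, phi_two]
    ring
  · push_cast
    have hB0 := phi_B b (P+((m:ℝ)+1+2)*b) (m+1) j
    have hB1 := phi_B b (P+((m:ℝ)+1+2)*b) m j
    have hB2 := phi_B b (P+((m:ℝ)+1+2)*b) m (j+1)
    have hB3 := phi_B b (P+((m:ℝ)+1+2)*b) m (j+2)
    simp only [show j+1+1 = j+2 from rfl, show j+2+1 = j+3 from rfl] at hB2 hB3
    push_cast at hB0 hB1 hB2 hB3
    have hC0 := phi_C b (P+((m:ℝ)+1+2)*b) m j
    have hC1 := phi_C b (P+((m:ℝ)+1+2)*b) m (j+1)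
    simp only [show j+1+1 = j+2 from rfl, show j+1+2 = j+3 from rfl] at hC1
    push_cast at hC0 hC1
    rw [hB0, hB1, hB2, hB3]
    linear_combination (-(P^2 + ((j:ℝ)+1)*P*b + (j:ℝ)*((m:ℝ)+3)*b^2)) * hC0
      + (-((j:ℝ)*b*(P+((j:ℝ)+3)*b))) * hC1

noncomputable def Fml (a b : ℝ) : ℕ → ℕ → ℕ → ℕ → ℝ
  | 0, e, _, k => a^e * b^k
  | (n+1), e, j, k =>
      a^e * b^k * ((a + ((e:ℝ)+(k:ℝ))*b + (j:ℝ)*b)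
          * phi b (a + ((e:ℝ)+(k:ℝ))*b + ((n:ℝ)+1)*b) (n+1) j
        - (n:ℝ) * b * (a + ((e:ℝ)+(k:ℝ))*b)
          * phi b (a + ((e:ℝ)+(k:ℝ))*b + ((n:ℝ)+1)*b) n j)

set_option maxHeartbeats 1600000 in
lemma Fml_rec (a b : ℝ) (n e j k : ℕ) :
    Fml a b (n+1) e j k
      = Fml a b n (e+1) (j+1) k + ((e:ℝ)+(k:ℝ)) * Fml a b n e (j+1) (k+1)
        + (j:ℝ) * Fml a b n e (j+2) (k+1) := by
  rcases n with _ | n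
  · simp [Fml, phi_one, phi_zero]
    push_cast
    ring
  · simp only [Fml]
    rw [show a + ((e:ℝ)+(k:ℝ))*b + (((n+1 : ℕ):ℝ)+1)*b
        = a + ((e:ℝ)+(k:ℝ))*b + ((n:ℝ)+2)*b from by push_cast; ring,
      show a + (((e+1 : ℕ):ℝ)+(k:ℝ))*b + ((n:ℝ)+1)*b
        = a + ((e:ℝ)+(k:ℝ))*b + ((n:ℝ)+2)*b from by push_cast; ring,
      show a + ((e:ℝ)+((k+1 : ℕ):ℝ))*b + ((n:ℝ)+1)*b
        = a + ((e:ℝ)+(k:ℝ))*b + ((n:ℝ)+2)*b from by push_cast; ring]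
    simp only [show n+1+1 = n+2 from rfl]
    push_cast
    have hstar := phi_star b (a + ((e:ℝ)+(k:ℝ))*b) n j
    linear_combination (a^e*b^k) * hstar

lemma Dgram_X0 : Dgram (X 0) = X 0 * X 1 * X 2 := by
  simp [Dgram, MvPolynomial.mkDerivation_X]
lemma Dgram_X1 : Dgram (X 1) = X 1 * X 2 * X 3 := by
  simp [Dgram, MvPolynomial.mkDerivation_X]
lemma Dgram_X2 : Dgram (X 2) = X 2 ^ 3 * X 3 := by
  simp [Dgram, MvPolynomial.mkDerivation_X]
lemma Dgram_X3 : Dgram (X 3) = X 2 * X 3 ^ 2 := by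
  simp [Dgram, MvPolynomial.mkDerivation_X]

lemma Dgram_pow1 (e : ℕ) : Dgram (X 1 ^ e) = (e : MvPolynomial (Fin 4) ℚ) * (X 1 ^ e * X 2 * X 3) := by
  induction e with
  | zero => simp
  | succ e ih =>
    rw [pow_succ, Derivation.leibniz, ih, Dgram_X1]
    push_cast
    simp only [smul_eq_mul]
    ring
lemma Dgram_pow2 (j : ℕ) : Dgram (X 2 ^ j) = (j : MvPolynomial (Fin 4) ℚ) * (X 2 ^ (j+2) * X 3) := by
  induction j with
  | zero => simp
  | succ j ih =>
    rw [pow_succ, Derivation.leibniz, ih, Dgram_X2]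
    push_cast
    simp only [smul_eq_mul]
    ring
lemma Dgram_pow3 (k : ℕ) : Dgram (X 3 ^ k) = (k : MvPolynomial (Fin 4) ℚ) * (X 2 * X 3 ^ (k+1)) := by
  induction k with
  | zero => simp
  | succ k ih =>
    rw [pow_succ, Derivation.leibniz, ih, Dgram_X3]
    push_cast
    simp only [smul_eq_mul]
    ring

noncomputable def M (e j k : ℕ) : MvPolynomial (Fin 4) ℚ := X 0 * X 1 ^ e * X 2 ^ j * X 3 ^ k

lemma Dgram_M (e j k : ℕ) : Dgram (M e j k)
    = M (e+1) (j+1) k + ((e+k : ℕ) : MvPolynomial (Fin 4) ℚ) * M e (j+1) (k+1)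
      + (j : MvPolynomial (Fin 4) ℚ) * M e (j+2) (k+1) := by
  unfold M
  rw [Derivation.leibniz, Derivation.leibniz, Derivation.leibniz,
    Dgram_X0, Dgram_pow1, Dgram_pow2, Dgram_pow3]
  simp only [smul_eq_mul]
  push_cast
  ring

lemma Dgram_iter_add (n : ℕ) (p q : MvPolynomial (Fin 4) ℚ) :
    (fun p => Dgram p)^[n] (p + q) = (fun p => Dgram p)^[n] p + (fun p => Dgram p)^[n] q := by
  induction n generalizing p q with
  | zero => simp
  | succ n ih => simp [Function.iterate_succ_apply, map_add, ih]

lemma Dgram_natCast (c : ℕ) (p : MvPolynomial (Fin 4) ℚ) :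
    Dgram ((c : MvPolynomial (Fin 4) ℚ) * p) = (c : MvPolynomial (Fin 4) ℚ) * Dgram p := by
  rw [Derivation.leibniz]
  simp only [smul_eq_mul]
  have : Dgram ((c : MvPolynomial (Fin 4) ℚ)) = 0 := by
    have := Dgram.map_natCast c
    simpa using this
  rw [this]
  ring

lemma Dgram_iter_natCast (n : ℕ) (c : ℕ) (p : MvPolynomial (Fin 4) ℚ) :
    (fun p => Dgram p)^[n] ((c : MvPolynomial (Fin 4) ℚ) * p)
      = (c : MvPolynomial (Fin 4) ℚ) * (fun p => Dgram p)^[n] p := by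
  induction n generalizing p with
  | zero => simp
  | succ n ih => simp [Function.iterate_succ_apply, Dgram_natCast, ih]

lemma aeval_M (a b : ℝ) (e j k : ℕ) :
    MvPolynomial.aeval ![(1:ℝ),a,1,b] (M e j k) = a^e * b^k := by
  simp [M]

lemma St (a b : ℝ) : ∀ (n e j k : ℕ),
    MvPolynomial.aeval ![(1:ℝ),a,1,b] ((fun p => Dgram p)^[n] (M e j k)) = Fml a b n e j k := by
  intro n
  induction n with
  | zero =>
    intro e j k
    simp only [Function.iterate_zero, id_eq, Fml]
    exact aeval_M a b e j k
  | succ n ih =>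
    intro e j k
    rw [Function.iterate_succ_apply, Dgram_M, Dgram_iter_add, Dgram_iter_add,
      Dgram_iter_natCast, Dgram_iter_natCast, map_add, map_add, map_mul, map_mul,
      map_natCast, map_natCast, ih, ih, ih, Fml_rec]
    push_cast
    ring

lemma Fml_val (a b : ℝ) (N : ℕ) : Fml a b (N+1) 0 0 0 = a * (a + ((N:ℝ)+1) * b)^N := by
  simp only [Fml]
  rw [show (a + (((0:ℕ):ℝ)+((0:ℕ):ℝ))*b + ((N:ℝ)+1)*b) = a + ((N:ℝ)+1)*b from by push_cast; ring]
  have hE := phi_Ext b (a + ((N:ℝ)+1)*b) N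
  push_cast
  linear_combination a * hE

theorem grammar_counts_x_parking (n : ℕ) (hn : 1 ≤ n) (a b : ℝ) :
    MvPolynomial.aeval ![(1 : ℝ), a, 1, b] ((fun p => Dgram p)^[n] (X 0)) =
      a * (a + b * n) ^ (n - 1) := by
  obtain ⟨N, rfl⟩ : ∃ N, n = N+1 := ⟨n-1, by omega⟩
  have hX : (X 0 : MvPolynomial (Fin 4) ℚ) = M 0 0 0 := by simp [M]
  rw [hX, St a b (N+1) 0 0 0, Fml_val]
  rw [show N+1-1 = N from rfl]
  push_cast
  ring
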